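/- Let R be a commutative Bézout ring and 0 ≠ c ∈ R. Suppose for all a,b ∈ R with aR + bR = R there exist r,s ∈ R such that c = rs, rR + sR = R, rR + aR = R, and sR + bR = R. Then R/cR is a clean ring. -/

import Mathlib

/-- A commutative ring has stable range 1. -/
def HasStableRange1 (R : Type*) [CommRing R] : Prop :=
  ∀ a b : R, Ideal.span {a} ⊔ Ideal.span {b} = ⊤ → ∃ y : R, IsUnit (a + b * y)

/-- An element `a` is stable if `R/aR` has stable range 1. -/
def IsStableElem {R : Type*} [CommRing R] (a : R) : Prop :=
  HasStableRange1 (R ⧸ Ideal.span {a})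

/-- A commutative ring is locally stable. -/
def LocallyStable (R : Type*) [CommRing R] : Prop :=
  ∀ a b : R, Ideal.span {a} ⊔ Ideal.span {b} = ⊤ →
    ∃ y : R, HasStableRange1 (R ⧸ Ideal.span {a + b * y})

/-- A clean ring: every element is the sum of an idempotent and a unit. -/
def IsCleanRing (R : Type*) [CommRing R] : Prop :=
  ∀ a : R, ∃ e u : R, IsIdempotentElem e ∧ IsUnit u ∧ a = e + u

/-- A ring has neat range 1. -/
def NeatRange1 (R : Type*) [CommRing R] : Prop :=
  ∀ a b : R, Ideal.span {a} ⊔ Ideal.span {b} = ⊤ →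
    ∃ y : R, IsCleanRing (R ⧸ Ideal.span {a + b * y})

/-- A ring has almost stable range 1: every proper homomorphic image has stable range 1. -/
def AlmostStableRange1 (R : Type*) [CommRing R] : Prop :=
  ∀ I : Ideal R, I ≠ ⊥ → HasStableRange1 (R ⧸ I)

/-- An elementary divisor ring: every rectangular matrix admits diagonal reduction. -/
def ElementaryDivisorRing (R : Type*) [CommRing R] : Prop :=
  ∀ (m n : ℕ) (A : Matrix (Fin m) (Fin n) R),
    ∃ (P : Matrix (Fin m) (Fin m) R) (Q : Matrix (Fin n) (Fin n) R),
      IsUnit P ∧ IsUnit Q ∧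
      (∀ (i : Fin m) (j : Fin n), (i : ℕ) ≠ (j : ℕ) → (P * A * Q) i j = 0) ∧
      (∀ (i i' : Fin m) (j j' : Fin n), (i : ℕ) = (j : ℕ) → (i' : ℕ) = (j' : ℕ) →
        (i' : ℕ) = (i : ℕ) + 1 → (P * A * Q) i j ∣ (P * A * Q) i' j')

/-- A ring is strongly completable. -/
def StronglyCompletable (R : Type*) [CommRing R] : Prop :=
  ∀ (n : ℕ) (hn : 0 < n) (a : Fin n → R) (d : R),
    (⨆ i, Ideal.span {a i}) = Ideal.span {d} →
    ∃ A : Matrix (Fin n) (Fin n) R, (∀ j, A ⟨0, hn⟩ j = a j) ∧ A.det = d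

private lemma exists_comb9 {R : Type*} [CommRing R] {x y : R}
    (h : Ideal.span {x} ⊔ Ideal.span {y} = ⊤) : ∃ m n : R, m * x + n * y = 1 := by
  have h1 : (1 : R) ∈ Ideal.span {x} ⊔ Ideal.span {y} := h ▸ Submodule.mem_top
  rw [Submodule.mem_sup] at h1
  obtain ⟨u, hu, v, hv, huv⟩ := h1
  rw [Ideal.mem_span_singleton'] at hu hv
  obtain ⟨m, rfl⟩ := hu
  obtain ⟨n, rfl⟩ := hv
  exact ⟨m, n, huv⟩

theorem stmt9 (R : Type*) [CommRing R] [IsBezout R] (c : R) (hc : c ≠ 0)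
    (h : ∀ a b : R, Ideal.span {a} ⊔ Ideal.span {b} = ⊤ →
      ∃ r s : R, c = r * s ∧ Ideal.span {r} ⊔ Ideal.span {s} = ⊤ ∧
        Ideal.span {r} ⊔ Ideal.span {a} = ⊤ ∧ Ideal.span {s} ⊔ Ideal.span {b} = ⊤) :
    IsCleanRing (R ⧸ Ideal.span {c}) := by
  intro x
  obtain ⟨a, rfl⟩ := Ideal.Quotient.mk_surjective x
  have hcop : Ideal.span {a} ⊔ Ideal.span {a - 1} = ⊤ := by
    rw [Ideal.eq_top_iff_one, Submodule.mem_sup]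
    exact ⟨a, Ideal.mem_span_singleton.mpr dvd_rfl,
      -(a - 1), Ideal.mem_span_singleton.mpr (dvd_neg.mpr dvd_rfl), by ring⟩
  obtain ⟨r, s, hcrs, hrs, hra, hsa⟩ := h a (a - 1) hcop
  obtain ⟨p, q, h1⟩ := exists_comb9 hrs
  obtain ⟨p1, q1, h2⟩ := exists_comb9 hra
  obtain ⟨p2, q2, h3⟩ := exists_comb9 hsa
  have hα : (q1*q*s + q2*p*r)*(a - p*r) - 1
      = (-p - p1*q*s - p*q*q1*s + p*q2*(a - p*r)) * r := by
    linear_combination h1 + (q*s)*h2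
  have hβ : (q1*q*s + q2*p*r)*(a - p*r) - 1
      = (q*q1*(a - p*r) - p2 - q*q2*a + 2*(q*q2) - q*q*q2*s) * s := by
    linear_combination (q2*a - q2*p*r + q2*q*s - q2)*h1 + h3
  refine ⟨Ideal.Quotient.mk _ (p*r), Ideal.Quotient.mk _ (a - p*r), ?_, ?_, ?_⟩
  · show _ * _ = _
    rw [← map_mul, Ideal.Quotient.eq, Ideal.mem_span_singleton]
    exact ⟨-(p*q), by linear_combination (p*r)*h1 + (p*q)*hcrs⟩
  · refine IsUnit.of_mul_eq_one (Ideal.Quotient.mk _ (q1*q*s + q2*p*r)) ?_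
    rw [← map_mul, ← map_one (Ideal.Quotient.mk (Ideal.span {c})), Ideal.Quotient.eq,
      Ideal.mem_span_singleton]
    refine ⟨p*(q*q1*(a - p*r) - p2 - q*q2*a + 2*(q*q2) - q*q*q2*s)
      + q*(-p - p1*q*s - p*q*q1*s + p*q2*(a - p*r)), ?_⟩
    linear_combination (-((q1*q*s + q2*p*r)*(a - p*r) - 1))*h1 + (q*s)*hα + (p*r)*hβ
      - (p*(q*q1*(a - p*r) - p2 - q*q2*a + 2*(q*q2) - q*q*q2*s)
        + q*(-p - p1*q*s - p*q*q1*s + p*q2*(a - p*r)))*hcrs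
  · rw [← map_add]
    congr 1
    ring
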